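/- Let μ ∈ M(ℝ) be a finite signed Borel measure with Jordan decomposition μ = μ⁺ − μ⁻ and ‖μ⁻‖ < 1, and set A = 1/(1 + ‖μ⁺‖ − ‖μ⁻‖). Let c ≥ 0 and let u ∈ C²(ℝ) ∩ L^∞(ℝ) be a solution of i·c·u′ + u′′ + u·(W ∗ (1 − |u|²)) = 0 with W = A·(δ₀ + μ). If v = |u|² attains its supremum M at a point x₀ with v″(x₀) ≤ 0 and (W ∗ v)(x₀) ≤ 1 + c²/4, then M ≤ (1 + ‖μ⁺‖/(1 − ‖μ⁻‖))·(1 + c²/4). -/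

import Mathlib

open MeasureTheory

/-- Integration against a finite signed measure via Jordan decomposition. -/
noncomputable def signedIntegral (μ : MeasureTheory.SignedMeasure ℝ) (f : ℝ → ℝ) : ℝ :=
  (∫ y, f y ∂μ.toJordanDecomposition.posPart) - ∫ y, f y ∂μ.toJordanDecomposition.negPart

/-- Convolution `(μ ∗ f)(x) = ∫ f(x − y) dμ(y)`. -/
noncomputable def signedConv (μ : MeasureTheory.SignedMeasure ℝ) (f : ℝ → ℝ) (x : ℝ) : ℝ :=
  signedIntegral μ (fun y => f (x - y))

/-- Let `μ` be a finite signed measure with Jordan decomposition `μ = μ⁺ − μ⁻`,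
`‖μ⁻‖ < 1`, and `A = 1/(1 + ‖μ⁺‖ − ‖μ⁻‖)`. If `u ∈ C²(ℝ) ∩ L^∞(ℝ)` solves
`i·c·u′ + u″ + u·(W ∗ (1 − |u|²)) = 0` with `W = A·(δ₀ + μ)`, and `v = |u|²`
attains its supremum `M` at `x₀` with `v″(x₀) ≤ 0` and `(W∗v)(x₀) ≤ 1 + c²/4`,
then `M ≤ (1 + ‖μ⁺‖/(1 − ‖μ⁻‖))·(1 + c²/4)`. -/
theorem Linfty_bound_delta_mu_potential (c : ℝ) (hc : 0 ≤ c)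
    (μ : MeasureTheory.SignedMeasure ℝ)
    (nP nN : ℝ)
    (hnP : nP = (μ.toJordanDecomposition.posPart Set.univ).toReal)
    (hnN : nN = (μ.toJordanDecomposition.negPart Set.univ).toReal)
    (hN1 : nN < 1)
    (A : ℝ) (hA : A = 1 / (1 + nP - nN))
    (u : ℝ → ℂ) (hu : ContDiff ℝ 2 u) (hubd : ∃ C : ℝ, ∀ x, ‖u x‖ ≤ C)
    (heq : ∀ x : ℝ,
      Complex.I * (c : ℂ) * deriv u x + deriv (deriv u) x
        + u x * ((A * ((1 - (‖u x‖) ^ 2)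
            + signedConv μ (fun y => 1 - (‖u y‖) ^ 2) x) : ℝ) : ℂ) = 0)
    (v : ℝ → ℝ) (hv : ∀ x, v x = (‖u x‖) ^ 2)
    (M : ℝ) (x₀ : ℝ) (hsup : ∀ x, v x ≤ M) (hattain : v x₀ = M)
    (hconc : deriv (deriv v) x₀ ≤ 0)
    (hW : A * (v x₀ + signedConv μ v x₀) ≤ 1 + c ^ 2 / 4) :
    M ≤ (1 + nP / (1 - nN)) * (1 + c ^ 2 / 4) := by
  have hv0 : ∀ x, 0 ≤ v x := fun x => (hv x).symm ▸ sq_nonneg _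
  have hM0 : 0 ≤ M := hattain ▸ hv0 x₀
  have hnN0 : 0 ≤ nN := hnN ▸ ENNReal.toReal_nonneg
  have hnP0 : 0 ≤ nP := hnP ▸ ENNReal.toReal_nonneg
  have hden : (0:ℝ) < 1 + nP - nN := by linarith
  have hA0 : 0 < A := by rw [hA]; positivity
  -- bound the convolution from below
  have hvmeas : Measurable v := by
    have : Continuous v := by
      have := hu.continuous
      rw [funext hv]; exact this.norm.pow 2
    exact this.measurable
  set νp := μ.toJordanDecomposition.posPart
  set νn := μ.toJordanDecomposition.negPart
  have hpos : 0 ≤ ∫ y, v (x₀ - y) ∂νp :=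
    integral_nonneg fun y => hv0 _
  have hint : Integrable (fun y => v (x₀ - y)) νn := by
    refine (integrable_const M).mono' ?_ ?_
    · exact (hvmeas.comp (measurable_const.sub measurable_id)).aestronglyMeasurable
    · exact Filter.Eventually.of_forall fun y => by
        rw [Real.norm_eq_abs, abs_of_nonneg (hv0 _)]; exact hsup _
  have hneg : ∫ y, v (x₀ - y) ∂νn ≤ nN * M := by
    calc ∫ y, v (x₀ - y) ∂νn ≤ ∫ _, M ∂νn :=
          integral_mono hint (integrable_const M) fun y => hsup _
      _ = nN * M := by rw [integral_const, hnN]; simp [smul_eq_mul, Measure.real]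
  have hconv : -(nN * M) ≤ signedConv μ v x₀ := by
    unfold signedConv signedIntegral
    have := sub_le_sub hpos hneg
    linarith [sub_le_sub hpos hneg]
  have key : A * (M * (1 - nN)) ≤ 1 + c ^ 2 / 4 := by
    have : A * (M * (1 - nN)) ≤ A * (v x₀ + signedConv μ v x₀) := by
      rw [hattain]
      apply mul_le_mul_of_nonneg_left _ hA0.le
      nlinarith
    linarith
  have h1 : (1 : ℝ) - nN ≠ 0 := by linarith
  have h2 : (1 : ℝ) + nP - nN ≠ 0 := hden.ne'
  have hrw : (1 + nP / (1 - nN)) = 1 / (A * (1 - nN)) := by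
    rw [hA]; field_simp; ring
  rw [hrw]
  have hApos : 0 < A * (1 - nN) := by nlinarith
  rw [div_mul_eq_mul_div, one_mul, le_div_iff₀ hApos]
  nlinarith [key]
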